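/- Let n ≥ 1 be a natural number and d > 0 a real number. Then there exists β₀' ∈ (0, 1) such that for every β₀ ∈ (0, β₀'], defining a sequence β : ℕ → ℝ by β 0 = β₀ and β (N+1) = β N / (2 * (Real.log (1 / β N))^d), the sequence is well defined and positive, and there exists N₀ such that for all N ≥ N₀, Real.exp (−(N : ℝ)^(1/(n:ℝ))) * β N < β (N+1) / 2. (That is, for the logarithmic transversality function t(β) = β / (log β⁻¹)^d, the ratio β_{N+1}/β_N decays only polynomially in N, so the globalization inequality exp(−N^{1/n}) · β_N < β_{N+1}/2 required by Donaldson's patching argument does hold for all large N.) -/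

import Mathlib

open Filter Real

private lemma aux_log_le_two_sqrt {x : ℝ} (hx : 1 ≤ x) : Real.log x ≤ 2 * Real.sqrt x := by
  have h0 : (0:ℝ) ≤ x := by linarith
  have h1 : Real.log x = 2 * Real.log (Real.sqrt x) := by
    rw [Real.log_sqrt h0]; ring
  have h2 : Real.log (Real.sqrt x) ≤ Real.sqrt x - 1 :=
    Real.log_le_sub_one_of_pos (Real.sqrt_pos.mpr (by linarith))
  nlinarith [Real.sqrt_nonneg x]

/-- For the logarithmic transversality function `t(β) = β / (log β⁻¹)^d`, the
globalization inequality `exp(−N^{1/n}) · β_N < β_{N+1}/2` required by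
Donaldson's patching argument does hold for all large `N`: there is a
threshold `β₀' ∈ (0,1)` such that for every starting value `β₀ ∈ (0, β₀']`,
the sequence `β 0 = β₀`, `β (N+1) = β N / (2 (log (1/β N))^d)` is positive and
eventually satisfies the inequality. -/
theorem log_transversality_globalization
    (n : ℕ) (hn : 1 ≤ n) (d : ℝ) (hd : 0 < d) :
    ∃ β₀' : ℝ, 0 < β₀' ∧ β₀' < 1 ∧
      ∀ β₀ : ℝ, 0 < β₀ → β₀ ≤ β₀' →
        ∀ β : ℕ → ℝ, β 0 = β₀ →
          (∀ N : ℕ, β (N + 1) = β N / (2 * Real.log (1 / β N) ^ d)) →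
          (∀ N : ℕ, 0 < β N) ∧
            ∃ N₀ : ℕ, ∀ N ≥ N₀,
              Real.exp (-(N : ℝ) ^ (1 / (n : ℝ))) * β N < β (N + 1) / 2 := by
  refine ⟨Real.exp (-1), Real.exp_pos _, by
    rw [Real.exp_lt_one_iff]; norm_num, ?_⟩
  intro β₀ hβ₀ hle β hβ0 hrec
  -- the key invariant
  have key : ∀ N, 0 < β N ∧ β N ≤ Real.exp (-1) := by
    intro N
    induction N with
    | zero => rw [hβ0]; exact ⟨hβ₀, hle⟩
    | succ N ih =>
      obtain ⟨hpos, hub⟩ := ih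
      have hlog : Real.log (β N) ≤ -1 := (Real.log_le_iff_le_exp hpos).mpr hub
      have hL : 1 ≤ Real.log (1 / β N) := by
        rw [one_div, Real.log_inv]; linarith
      have hLpos : 0 < Real.log (1 / β N) := by linarith
      have hX : (1:ℝ) ≤ Real.log (1 / β N) ^ d := Real.one_le_rpow hL hd.le
      have hXpos : (0:ℝ) < Real.log (1 / β N) ^ d := by positivity
      have hstep : β (N + 1) ≤ β N / 2 := by
        rw [hrec N]
        apply div_le_div_of_nonneg_left hpos.le two_pos
        linarith
      constructor
      · rw [hrec N]; positivity
      · calc β (N + 1) ≤ β N / 2 := hstep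
          _ ≤ β N := by linarith
          _ ≤ Real.exp (-1) := hub
  have hpos : ∀ N, 0 < β N := fun N => (key N).1
  refine ⟨hpos, ?_⟩
  -- the sequence of logarithms
  set L : ℕ → ℝ := fun N => Real.log (1 / β N) with hLdef
  have hL1 : ∀ N, 1 ≤ L N := by
    intro N
    have hlog : Real.log (β N) ≤ -1 := (Real.log_le_iff_le_exp (hpos N)).mpr (key N).2
    simp only [hLdef, one_div, Real.log_inv]; linarith
  have hLpos : ∀ N, 0 < L N := fun N => lt_of_lt_of_le one_pos (hL1 N)
  have hXpos : ∀ N, (0:ℝ) < L N ^ d := fun N => Real.rpow_pos_of_pos (hLpos N) d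
  -- recurrence for L
  have hLrec : ∀ N, L (N + 1) = L N + Real.log 2 + d * Real.log (L N) := by
    intro N
    have h2X : (0:ℝ) < 2 * L N ^ d := mul_pos two_pos (hXpos N)
    have : (1 : ℝ) / β (N + 1) = 2 * L N ^ d * (1 / β N) := by
      rw [hrec N]
      field_simp
      rfl
    simp only [hLdef] at this ⊢
    rw [this, Real.log_mul h2X.ne' (one_div_pos.mpr (hpos N)).ne',
      Real.log_mul (by norm_num) (hXpos N).ne', Real.log_rpow (hLpos N)]
    ring
  -- polynomial growth bound
  set C : ℝ := L 0 + d ^ 2 + 1 with hCdef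
  have hC1 : (1:ℝ) ≤ C := by nlinarith [hL1 0]
  have hCpos : (0:ℝ) < C := by linarith
  have hdC : d ≤ Real.sqrt C := by
    have h1 : d = Real.sqrt (d ^ 2) := by rw [Real.sqrt_sq hd.le]
    rw [h1]
    apply Real.sqrt_le_sqrt
    nlinarith [hL1 0]
  have hsqC : Real.sqrt C * Real.sqrt C = C := Real.mul_self_sqrt hCpos.le
  have hbound : ∀ N : ℕ, L N ≤ C * ((N : ℝ) + 1) ^ 2 := by
    intro N
    induction N with
    | zero => push_cast; nlinarith [hL1 0, sq_nonneg d]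
    | succ N ih =>
      have hlogL : Real.log (L N) ≤ 2 * Real.sqrt (L N) := aux_log_le_two_sqrt (hL1 N)
      have hsq : Real.sqrt (L N) ≤ Real.sqrt C * ((N : ℝ) + 1) := by
        calc Real.sqrt (L N) ≤ Real.sqrt (C * ((N : ℝ) + 1) ^ 2) := Real.sqrt_le_sqrt ih
          _ = Real.sqrt C * ((N : ℝ) + 1) := by
            rw [Real.sqrt_mul hCpos.le, Real.sqrt_sq (by positivity)]
      have hlog2 : Real.log 2 ≤ 1 := by
        have := Real.log_le_sub_one_of_pos (x := 2) (by norm_num); linarith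
      have hNn : (0:ℝ) ≤ (N : ℝ) := Nat.cast_nonneg N
      rw [hLrec N]
      push_cast
      nlinarith [hsq, hlogL, hdC, hsqC, hd.le, Real.sqrt_nonneg (L N),
        Real.sqrt_nonneg C, mul_le_mul_of_nonneg_left hsq (by linarith : (0:ℝ) ≤ d)]
  -- eventual inequality via asymptotics
  have hnpos : (0:ℝ) < (n : ℝ) := by exact_mod_cast lt_of_lt_of_le zero_lt_one hn
  have hr : (0:ℝ) < 1 / (n : ℝ) := by positivity
  have hcpos : (0:ℝ) < 1 / (2 * (2 * d + 1)) := by positivity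
  have h1 : ∀ᶠ x : ℝ in atTop,
      Real.log x ≤ (1 / (2 * (2 * d + 1))) * x ^ (1 / (n : ℝ)) := by
    filter_upwards [(isLittleO_log_rpow_atTop hr).bound hcpos, eventually_ge_atTop (1:ℝ)]
      with x hx hx1
    calc Real.log x ≤ |Real.log x| := le_abs_self _
      _ ≤ (1 / (2 * (2 * d + 1))) * |x ^ (1 / (n : ℝ))| := by
          simpa [Real.norm_eq_abs] using hx
      _ = (1 / (2 * (2 * d + 1))) * x ^ (1 / (n : ℝ)) := by
          rw [abs_of_nonneg (Real.rpow_nonneg (by linarith) _)]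
  have h3 : ∀ᶠ x : ℝ in atTop,
      2 * (Real.log 4 + d * Real.log C + 2 * d * Real.log 2) < x ^ (1 / (n : ℝ)) :=
    (tendsto_rpow_atTop hr).eventually_gt_atTop _
  have hcomb : ∀ᶠ x : ℝ in atTop,
      Real.log 4 + d * Real.log C + 2 * d * Real.log (x + 1) < x ^ (1 / (n : ℝ)) := by
    filter_upwards [h1, h3, eventually_ge_atTop (1:ℝ)] with x hx1 hx3 hx4
    have hxpos : (0:ℝ) < x := by linarith
    have hlx : Real.log (x + 1) ≤ Real.log 2 + Real.log x := by
      rw [← Real.log_mul (by norm_num) hxpos.ne']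
      exact Real.log_le_log (by linarith) (by linarith)
    have h2d : 2 * d * (1 / (2 * (2 * d + 1))) ≤ 1 / 2 := by
      rw [mul_one_div, div_le_div_iff₀ (by positivity) (by norm_num : (0:ℝ) < 2)]
      nlinarith
    have hxr : (0:ℝ) ≤ x ^ (1 / (n : ℝ)) := Real.rpow_nonneg hxpos.le _
    nlinarith [mul_le_mul_of_nonneg_left hlx (by linarith : (0:ℝ) ≤ 2 * d),
      mul_le_mul_of_nonneg_right h2d hxr,
      mul_le_mul_of_nonneg_left hx1 (by linarith : (0:ℝ) ≤ 2 * d)]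
  have hnat : ∀ᶠ N : ℕ in atTop,
      Real.log 4 + d * Real.log C + 2 * d * Real.log ((N : ℝ) + 1)
        < (N : ℝ) ^ (1 / (n : ℝ)) :=
    (tendsto_natCast_atTop_atTop (R := ℝ)).eventually hcomb
  rw [eventually_atTop] at hnat
  obtain ⟨N₀, hN₀⟩ := hnat
  refine ⟨N₀, fun N hN => ?_⟩
  have hkey := hN₀ N hN
  -- bound log (4 * L N ^ d)
  have hlogLN : Real.log (L N) ≤ Real.log C + 2 * Real.log ((N : ℝ) + 1) := by
    calc Real.log (L N) ≤ Real.log (C * ((N : ℝ) + 1) ^ 2) :=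
          Real.log_le_log (hLpos N) (hbound N)
      _ = Real.log C + 2 * Real.log ((N : ℝ) + 1) := by
          rw [Real.log_mul hCpos.ne' (by positivity), Real.log_pow]
          push_cast; ring
  have h4X : (0:ℝ) < 4 * L N ^ d := mul_pos (by norm_num) (hXpos N)
  have hlog4X : Real.log (4 * L N ^ d) < (N : ℝ) ^ (1 / (n : ℝ)) := by
    rw [Real.log_mul (by norm_num) (hXpos N).ne', Real.log_rpow (hLpos N)]
    nlinarith [mul_le_mul_of_nonneg_left hlogLN hd.le]
  have hlt : 4 * L N ^ d < Real.exp ((N : ℝ) ^ (1 / (n : ℝ))) :=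
    (Real.log_lt_iff_lt_exp h4X).mp hlog4X
  -- conclude
  have hrw : β (N + 1) / 2 = β N / (4 * L N ^ d) := by
    have h := hrec N
    rw [show Real.log (1 / β N) = L N from rfl] at h
    rw [h, div_div, show (2 * L N ^ d) * 2 = 4 * L N ^ d by ring]
  rw [hrw, Real.exp_neg, ← div_eq_inv_mul]
  exact div_lt_div_of_pos_left (hpos N) h4X hlt
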